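/- Let X be a Banach space and let A be a subalgebra of B(X) which contains every bounded finite-rank operator on X. Then the operator norm on A is minimal: for every algebra norm ν on A there is a constant C > 0 such that ‖T‖ ≤ C·ν(T) for every T ∈ A. -/

import Mathlib

/-- A function `ν : A → ℝ` is an algebra norm on the algebra `A` over `𝕜` if it is a norm
(definite, subadditive, absolutely homogeneous) which is submultiplicative. -/
def IsAlgebraNorm (𝕜 : Type*) [RCLike 𝕜] {A : Type*} [NonUnitalRing A] [Module 𝕜 A]
    (ν : A → ℝ) : Prop :=
  (∀ a : A, ν a = 0 ↔ a = 0) ∧ (∀ a b : A, ν (a + b) ≤ ν a + ν b) ∧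
    (∀ (c : 𝕜) (a : A), ν (c • a) = ‖c‖ * ν a) ∧ ∀ a b : A, ν (a * b) ≤ ν a * ν b

set_option maxHeartbeats 1000000 in
/-- Let `X` be a Banach space and `A` a subalgebra of `B(X)` containing
every bounded finite-rank operator. Then the operator norm on `A` is minimal: for every
algebra norm `ν` on `A` there is `C > 0` with `‖T‖ ≤ C * ν T` for every `T ∈ A`. -/
theorem statement5 {𝕜 : Type*} [RCLike 𝕜] {X : Type*} [NormedAddCommGroup X]
    [NormedSpace 𝕜 X] [CompleteSpace X]
    (A : NonUnitalSubalgebra 𝕜 (X →L[𝕜] X))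
    (hA : ∀ T : X →L[𝕜] X, FiniteDimensional 𝕜 ↥(LinearMap.range (T : X →ₗ[𝕜] X)) → T ∈ A)
    (ν : ↥A → ℝ) (hν : IsAlgebraNorm 𝕜 ν) :
    ∃ C > 0, ∀ T : ↥A, ‖(T : X →L[𝕜] X)‖ ≤ C * ν T := by
  obtain ⟨hdef, hadd, hsmul, hmul⟩ := hν
  have hν0 : ν 0 = 0 := (hdef 0).mpr rfl
  have hneg : ∀ a : ↥A, ν (-a) = ν a := by
    intro a
    have h1 : ((-1 : 𝕜) • a) = -a := by simp
    rw [← h1, hsmul]; simp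
  have hnonneg : ∀ a : ↥A, 0 ≤ ν a := by
    intro a
    have h := hadd a (-a)
    rw [add_neg_cancel, hν0, hneg] at h
    linarith
  rcases subsingleton_or_nontrivial X with hX | hX
  · refine ⟨1, one_pos, fun T => ?_⟩
    have hT : (T : X →L[𝕜] X) = 0 := by ext x; exact Subsingleton.elim _ _
    rw [hT]
    simpa using hnonneg T
  -- Nontrivial case
  obtain ⟨x₀, hx₀⟩ := exists_ne (0 : X)
  obtain ⟨f₀, hf₀norm, hf₀⟩ := exists_dual_vector 𝕜 x₀ (norm_ne_zero_iff.mpr hx₀)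
  -- rank-one operators belong to A
  have hmem : ∀ (f : X →L[𝕜] 𝕜) (x : X), f.smulRight x ∈ A := by
    intro f x
    apply hA
    have hle : LinearMap.range ((f.smulRight x : X →L[𝕜] X) : X →ₗ[𝕜] X)
        ≤ Submodule.span 𝕜 ({x} : Set X) := by
      rintro y ⟨z, rfl⟩
      simp only [ContinuousLinearMap.coe_coe, ContinuousLinearMap.smulRight_apply]
      exact Submodule.smul_mem _ _ (Submodule.mem_span_singleton_self x)
    exact Submodule.finiteDimensional_of_le hle
  set Rop : X → ↥A := fun x => ⟨f₀.smulRight x, hmem f₀ x⟩ with hRopdef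
  set Lop : (X →L[𝕜] 𝕜) → ↥A := fun f => ⟨f.smulRight x₀, hmem f x₀⟩ with hLopdef
  set e₀ : ↥A := Rop x₀ with he₀def
  have he₀ : 0 < ν e₀ := by
    rcases (hnonneg e₀).lt_or_eq with h | h
    · exact h
    · exfalso
      have hz : e₀ = 0 := (hdef e₀).mp h.symm
      have h2 : (e₀ : X →L[𝕜] X) x₀ = 0 := by rw [hz]; rfl
      have h3 : f₀ x₀ • x₀ = 0 := by
        simpa [he₀def, hRopdef, ContinuousLinearMap.smulRight_apply] using h2
      rcases smul_eq_zero.mp h3 with h4 | h4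
      · rw [hf₀] at h4
        exact hx₀ (norm_eq_zero.mp (by exact_mod_cast h4))
      · exact hx₀ h4
  -- the key rank-one identity
  have hkey : ∀ (T : ↥A) (f : X →L[𝕜] 𝕜) (x : X),
      Lop f * T * Rop x = f ((T : X →L[𝕜] X) x) • e₀ := by
    intro T f x
    apply Subtype.ext
    ext y
    simp [hLopdef, hRopdef, he₀def, ContinuousLinearMap.mul_apply,
      ContinuousLinearMap.smulRight_apply, smul_smul, mul_comm]
  have hineq : ∀ (T : ↥A) (f : X →L[𝕜] 𝕜) (x : X),
      ‖f ((T : X →L[𝕜] X) x)‖ * ν e₀ ≤ ν (Lop f) * ν T * ν (Rop x) := by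
    intro T f x
    have h1 : ν (Lop f * T * Rop x) = ‖f ((T : X →L[𝕜] X) x)‖ * ν e₀ := by
      rw [hkey]; exact hsmul _ _
    have h2 := hmul (Lop f * T) (Rop x)
    have h3 := hmul (Lop f) T
    have h4 := hnonneg (Rop x)
    rw [← h1]
    calc ν (Lop f * T * Rop x) ≤ ν (Lop f * T) * ν (Rop x) := h2
      _ ≤ ν (Lop f) * ν T * ν (Rop x) := mul_le_mul_of_nonneg_right h3 h4
  have hLsmul : ∀ (c : 𝕜) (f : X →L[𝕜] 𝕜), Lop (c • f) = c • Lop f := by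
    intro c f
    apply Subtype.ext
    ext y
    simp [hLopdef, ContinuousLinearMap.smulRight_apply, smul_smul]
  have hTzero : ∀ T : ↥A, ν T = 0 → (T : X →L[𝕜] X) = 0 := by
    intro T hT
    rw [(hdef T).mp hT]; rfl
  have hLzero : ∀ f : X →L[𝕜] 𝕜, ν (Lop f) = 0 → f = 0 := by
    intro f hf
    have hz : Lop f = 0 := (hdef _).mp hf
    ext y
    have h2 : ((Lop f : ↥A) : X →L[𝕜] X) y = 0 := by rw [hz]; rfl
    have h3 : f y • x₀ = 0 := by
      simpa [hLopdef, ContinuousLinearMap.smulRight_apply] using h2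
    rcases smul_eq_zero.mp h3 with h4 | h4
    · simpa using h4
    · exact absurd h4 hx₀
  have hnormcast : ∀ r : ℝ, 0 ≤ r → ‖((r : 𝕜))⁻¹‖ = r⁻¹ := by
    intro r hr
    rw [norm_inv, RCLike.norm_ofReal, abs_of_nonneg hr]
  -- First application of uniform boundedness
  have hstep1 : ∃ M₁ : ℝ, 0 ≤ M₁ ∧ ∀ (T : ↥A) (f : X →L[𝕜] 𝕜) (x : X),
      ‖f ((T : X →L[𝕜] X) x)‖ ≤ M₁ * ν (Lop f) * ν T * ‖x‖ := by
    have hpt : ∀ x : X, ∃ C, ∀ p : {p : ↥A × (X →L[𝕜] 𝕜) // ν p.1 ≤ 1 ∧ ν (Lop p.2) ≤ 1},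
        ‖(p.1.2.comp ((p.1.1 : ↥A) : X →L[𝕜] X)) x‖ ≤ C := by
      intro x
      refine ⟨(ν e₀)⁻¹ * ν (Rop x), fun p => ?_⟩
      obtain ⟨⟨T, f⟩, hT1, hf1⟩ := p
      simp only [ContinuousLinearMap.comp_apply]
      have h := hineq T f x
      have hL0 := hnonneg (Lop f)
      have hT0 := hnonneg T
      have hR0 := hnonneg (Rop x)
      have h5 : ν (Lop f) * ν T ≤ 1 := by
        nlinarith [mul_le_mul hf1 hT1 hT0 zero_le_one]
      have h6 : ‖f ((T : X →L[𝕜] X) x)‖ * ν e₀ ≤ ν (Rop x) :=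
        le_trans h (mul_le_of_le_one_left hR0 h5)
      have h7 := (le_div_iff₀ he₀).mpr h6
      rw [div_eq_inv_mul] at h7
      exact h7
    obtain ⟨M₁, hM₁⟩ := banach_steinhaus hpt
    refine ⟨max M₁ 0, le_max_right _ _, fun T f x => ?_⟩
    by_cases hT : ν T = 0
    · have : (T : X →L[𝕜] X) = 0 := hTzero T hT
      rw [this]
      simp only [ContinuousLinearMap.zero_apply, map_zero, norm_zero]
      exact mul_nonneg (mul_nonneg (mul_nonneg (le_max_right M₁ 0)
        (hnonneg (Lop f))) (hnonneg T)) (norm_nonneg x)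
    by_cases hf : ν (Lop f) = 0
    · rw [hLzero f hf]
      simp only [ContinuousLinearMap.zero_apply, norm_zero]
      exact mul_nonneg (mul_nonneg (mul_nonneg (le_max_right M₁ 0)
        (hnonneg (Lop 0))) (hnonneg T)) (norm_nonneg x)
    have hTpos : 0 < ν T := lt_of_le_of_ne (hnonneg T) (Ne.symm hT)
    have hfpos : 0 < ν (Lop f) := lt_of_le_of_ne (hnonneg (Lop f)) (Ne.symm hf)
    set T' : ↥A := ((ν T : 𝕜))⁻¹ • T with hT'def
    set f' : X →L[𝕜] 𝕜 := ((ν (Lop f) : 𝕜))⁻¹ • f with hf'def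
    have hT'1 : ν T' = 1 := by
      rw [hT'def, hsmul, hnormcast _ (hnonneg T), inv_mul_cancel₀ hT]
    have hf'1 : ν (Lop f') = 1 := by
      rw [hf'def, hLsmul, hsmul, hnormcast _ (hnonneg (Lop f)), inv_mul_cancel₀ hf]
    have hp := hM₁ ⟨(T', f'), le_of_eq hT'1, le_of_eq hf'1⟩
    have hle : ‖f' (((T' : ↥A) : X →L[𝕜] X) x)‖ ≤ M₁ * ‖x‖ := by
      calc ‖f' (((T' : ↥A) : X →L[𝕜] X) x)‖
          = ‖(f'.comp ((T' : ↥A) : X →L[𝕜] X)) x‖ := rfl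
        _ ≤ ‖f'.comp ((T' : ↥A) : X →L[𝕜] X)‖ * ‖x‖ := ContinuousLinearMap.le_opNorm _ _
        _ ≤ M₁ * ‖x‖ := by gcongr
    have hval : f' (((T' : ↥A) : X →L[𝕜] X) x)
        = ((ν (Lop f) : 𝕜))⁻¹ * (((ν T : 𝕜))⁻¹ * f ((T : X →L[𝕜] X) x)) := by
      rw [hf'def, hT'def]
      simp only [SetLike.val_smul, ContinuousLinearMap.coe_smul', Pi.smul_apply,
        ContinuousLinearMap.smul_apply, map_smul, smul_eq_mul]
      ring
    have hnorm : ‖f' (((T' : ↥A) : X →L[𝕜] X) x)‖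
        = (ν (Lop f))⁻¹ * ((ν T)⁻¹ * ‖f ((T : X →L[𝕜] X) x)‖) := by
      rw [hval, norm_mul, norm_mul, hnormcast _ (hnonneg (Lop f)), hnormcast _ (hnonneg T)]
    rw [hnorm] at hle
    have hM₁' : M₁ ≤ max M₁ 0 := le_max_left _ _
    have hxn : 0 ≤ ‖x‖ := norm_nonneg x
    calc ‖f ((T : X →L[𝕜] X) x)‖
        = ν (Lop f) * ν T * ((ν (Lop f))⁻¹ * ((ν T)⁻¹ * ‖f ((T : X →L[𝕜] X) x)‖)) := by
          field_simp
      _ ≤ ν (Lop f) * ν T * (M₁ * ‖x‖) := by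
          exact mul_le_mul_of_nonneg_left hle (mul_nonneg (hnonneg (Lop f)) (hnonneg T))
      _ = M₁ * ν (Lop f) * ν T * ‖x‖ := by ring
      _ ≤ max M₁ 0 * ν (Lop f) * ν T * ‖x‖ := by
          apply mul_le_mul_of_nonneg_right _ hxn
          apply mul_le_mul_of_nonneg_right _ (hnonneg T)
          exact mul_le_mul_of_nonneg_right hM₁' (hnonneg (Lop f))
  obtain ⟨M₁, hM₁0, hb1⟩ := hstep1
  -- Second application of uniform boundedness, on the dual space
  have hpt2 : ∀ f : X →L[𝕜] 𝕜, ∃ C, ∀ p : {p : ↥A × X // ν p.1 ≤ 1 ∧ ‖p.2‖ ≤ 1},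
      ‖(ContinuousLinearMap.apply 𝕜 𝕜 (((p.1.1 : ↥A) : X →L[𝕜] X) p.1.2)) f‖ ≤ C := by
    intro f
    refine ⟨M₁ * ν (Lop f), fun p => ?_⟩
    obtain ⟨⟨T, x⟩, hT1, hx1⟩ := p
    simp only [ContinuousLinearMap.apply_apply]
    have h := hb1 T f x
    have hL0 := hnonneg (Lop f)
    have hT0 := hnonneg T
    have hxn := norm_nonneg x
    have h5 : ν T * ‖x‖ ≤ 1 := by nlinarith [mul_le_mul hT1 hx1 hxn zero_le_one]
    have h6 := mul_le_of_le_one_right (mul_nonneg hM₁0 hL0) h5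
    calc ‖f ((T : X →L[𝕜] X) x)‖ ≤ M₁ * ν (Lop f) * ν T * ‖x‖ := h
      _ = M₁ * ν (Lop f) * (ν T * ‖x‖) := by ring
      _ ≤ M₁ * ν (Lop f) := h6
  obtain ⟨M₂, hM₂⟩ := banach_steinhaus hpt2
  set M₃ := max M₂ 0 with hM₃def
  have hM₃0 : 0 ≤ M₃ := le_max_right _ _
  have hb2 : ∀ T : ↥A, ν T ≤ 1 → ∀ x : X, ‖x‖ ≤ 1 → ‖(T : X →L[𝕜] X) x‖ ≤ M₃ := by
    intro T hT x hx
    apply NormedSpace.norm_le_dual_bound 𝕜 _ hM₃0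
    intro f
    have hp := hM₂ ⟨(T, x), hT, hx⟩
    calc ‖f ((T : X →L[𝕜] X) x)‖
        = ‖(ContinuousLinearMap.apply 𝕜 𝕜 ((T : X →L[𝕜] X) x)) f‖ := by
          rw [ContinuousLinearMap.apply_apply]
      _ ≤ ‖ContinuousLinearMap.apply 𝕜 𝕜 ((T : X →L[𝕜] X) x)‖ * ‖f‖ :=
          ContinuousLinearMap.le_opNorm _ _
      _ ≤ M₃ * ‖f‖ := by
          apply mul_le_mul_of_nonneg_right _ (norm_nonneg f)
          exact le_trans hp (le_max_left _ _)
  have hb3 : ∀ T : ↥A, ν T ≤ 1 → ‖(T : X →L[𝕜] X)‖ ≤ M₃ := by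
    intro T hT
    apply ContinuousLinearMap.opNorm_le_bound _ hM₃0
    intro x
    by_cases hx : x = 0
    · simp [hx]
    have hxn : (0:ℝ) < ‖x‖ := norm_pos_iff.mpr hx
    set x' : X := ((‖x‖ : 𝕜))⁻¹ • x with hx'def
    have hx'1 : ‖x'‖ ≤ 1 := by
      rw [hx'def, norm_smul, hnormcast _ (norm_nonneg x), inv_mul_cancel₀ (ne_of_gt hxn)]
    have h := hb2 T hT x' hx'1
    have hTx' : (T : X →L[𝕜] X) x' = ((‖x‖ : 𝕜))⁻¹ • (T : X →L[𝕜] X) x := by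
      rw [hx'def, map_smul]
    rw [hTx', norm_smul, hnormcast _ (norm_nonneg x)] at h
    calc ‖(T : X →L[𝕜] X) x‖ = ‖x‖ * ((‖x‖)⁻¹ * ‖(T : X →L[𝕜] X) x‖) := by field_simp
      _ ≤ ‖x‖ * M₃ := by exact mul_le_mul_of_nonneg_left h (le_of_lt hxn)
      _ = M₃ * ‖x‖ := mul_comm _ _
  refine ⟨max M₃ 1, lt_of_lt_of_le one_pos (le_max_right _ _), fun T => ?_⟩
  by_cases hT : ν T = 0
  · rw [hT, mul_zero]
    rw [hTzero T hT]
    simp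
  have hTpos : 0 < ν T := lt_of_le_of_ne (hnonneg T) (Ne.symm hT)
  set T' : ↥A := ((ν T : 𝕜))⁻¹ • T with hT'def
  have hT'1 : ν T' = 1 := by
    rw [hT'def, hsmul, hnormcast _ (hnonneg T), inv_mul_cancel₀ hT]
  have h := hb3 T' (le_of_eq hT'1)
  have hcoe : ((T' : ↥A) : X →L[𝕜] X) = ((ν T : 𝕜))⁻¹ • ((T : ↥A) : X →L[𝕜] X) := rfl
  have h2 : (ν T)⁻¹ * ‖((T : ↥A) : X →L[𝕜] X)‖ ≤ M₃ := by
    calc (ν T)⁻¹ * ‖((T : ↥A) : X →L[𝕜] X)‖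
        = ‖((ν T : 𝕜))⁻¹‖ * ‖((T : ↥A) : X →L[𝕜] X)‖ := by rw [hnormcast _ (hnonneg T)]
      _ = ‖((ν T : 𝕜))⁻¹ • ((T : ↥A) : X →L[𝕜] X)‖ := (norm_smul _ _).symm
      _ = ‖((T' : ↥A) : X →L[𝕜] X)‖ := by rw [hcoe]
      _ ≤ M₃ := h
  have hM₃le : M₃ ≤ max M₃ 1 := le_max_left _ _
  calc ‖(T : X →L[𝕜] X)‖ = ν T * ((ν T)⁻¹ * ‖(T : X →L[𝕜] X)‖) := by field_simp
    _ ≤ ν T * M₃ := mul_le_mul_of_nonneg_left h2 (le_of_lt hTpos)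
    _ ≤ ν T * max M₃ 1 := mul_le_mul_of_nonneg_left hM₃le (le_of_lt hTpos)
    _ = max M₃ 1 * ν T := mul_comm _ _
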